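/- The integral from |a|² to 1 of arccos(|a|/√t) dt equals arcsin(r) − r√(1−r²), where r² = 1 − |a|² and 0 ≤ |a| ≤ 1. -/

import Mathlib

open Real MeasureTheory


lemma key (b : ℝ) (hb0 : 0 ≤ b) (hb1 : b < 1) (hbpos : 0 < b) :
    (∫ t in (b ^ 2 : ℝ)..1, Real.arccos (b / Real.sqrt t))
      = Real.arccos b - b * Real.sqrt (1 - b ^ 2) := by
  have hb2 : b ^ 2 < 1 := by nlinarith
  set F : ℝ → ℝ := fun t => t * Real.arccos (b / Real.sqrt t) - b * Real.sqrt (t - b ^ 2)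
    with hF
  have hcont : ContinuousOn F (Set.Icc (b ^ 2) 1) := by
    apply ContinuousOn.sub
    · apply ContinuousOn.mul continuousOn_id
      apply Real.continuous_arccos.comp_continuousOn
      apply ContinuousOn.div continuousOn_const (Real.continuous_sqrt.continuousOn)
      intro t ht
      have : 0 < t := lt_of_lt_of_le (by positivity) ht.1
      positivity
    · exact (continuousOn_const.mul
        ((continuousOn_id.sub continuousOn_const).sqrt))
  have hderiv : ∀ t ∈ Set.Ioo (b ^ 2) 1,
      HasDerivWithinAt F (Real.arccos (b / Real.sqrt t)) (Set.Ioi t) t := by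
    intro t ht
    have ht0 : 0 < t := lt_trans (by positivity) ht.1
    have hs0 : 0 < Real.sqrt t := Real.sqrt_pos.mpr ht0
    have hw0 : 0 < t - b ^ 2 := sub_pos.mpr ht.1
    have hsw : 0 < Real.sqrt (t - b ^ 2) := Real.sqrt_pos.mpr hw0
    have hst : Real.sqrt t ^ 2 = t := Real.sq_sqrt ht0.le
    have hblt : b < Real.sqrt t := (Real.lt_sqrt hb0).mpr ht.1
    have hu1 : b / Real.sqrt t < 1 := (div_lt_one hs0).mpr hblt
    have hu0 : 0 ≤ b / Real.sqrt t := by positivity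
    have h1 : HasDerivAt (fun x : ℝ => Real.sqrt x) (1 / (2 * Real.sqrt t)) t :=
      Real.hasDerivAt_sqrt (ne_of_gt ht0)
    have h2 : HasDerivAt (fun x : ℝ => (Real.sqrt x)⁻¹)
        (-(1 / (2 * Real.sqrt t)) / (Real.sqrt t) ^ 2) t := h1.inv (ne_of_gt hs0)
    have h3 : HasDerivAt (fun x : ℝ => b / Real.sqrt x)
        (b * (-(1 / (2 * Real.sqrt t)) / (Real.sqrt t) ^ 2)) t := by
      simpa [div_eq_mul_inv] using h2.const_mul b
    have h4 : HasDerivAt (fun x : ℝ => Real.arccos (b / Real.sqrt x))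
        (-(1 / Real.sqrt (1 - (b / Real.sqrt t) ^ 2)) *
          (b * (-(1 / (2 * Real.sqrt t)) / (Real.sqrt t) ^ 2))) t :=
      by have h := (Real.hasDerivAt_arccos (by linarith) (ne_of_lt hu1)).comp t h3; exact h
    have h5 : HasDerivAt (fun x : ℝ => x * Real.arccos (b / Real.sqrt x))
        (1 * Real.arccos (b / Real.sqrt t) + t *
          (-(1 / Real.sqrt (1 - (b / Real.sqrt t) ^ 2)) *
            (b * (-(1 / (2 * Real.sqrt t)) / (Real.sqrt t) ^ 2)))) t :=
      (hasDerivAt_id t).mul h4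
    have h6 : HasDerivAt (fun x : ℝ => Real.sqrt (x - b ^ 2))
        (1 / (2 * Real.sqrt (t - b ^ 2)) * 1) t :=
      (Real.hasDerivAt_sqrt (ne_of_gt hw0)).comp t ((hasDerivAt_id t).sub_const (b ^ 2))
    have h7 : HasDerivAt F
        ((1 * Real.arccos (b / Real.sqrt t) + t *
          (-(1 / Real.sqrt (1 - (b / Real.sqrt t) ^ 2)) *
            (b * (-(1 / (2 * Real.sqrt t)) / (Real.sqrt t) ^ 2)))) -
          b * (1 / (2 * Real.sqrt (t - b ^ 2)) * 1)) t := h5.sub (h6.const_mul b)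
    have hkey : Real.sqrt (1 - (b / Real.sqrt t) ^ 2)
        = Real.sqrt (t - b ^ 2) / Real.sqrt t := by
      rw [show (1 : ℝ) - (b / Real.sqrt t) ^ 2 = (t - b ^ 2) / t by
        rw [div_pow, hst]; field_simp]
      rw [Real.sqrt_div hw0.le]
    have : (1 * Real.arccos (b / Real.sqrt t) + t *
          (-(1 / Real.sqrt (1 - (b / Real.sqrt t) ^ 2)) *
            (b * (-(1 / (2 * Real.sqrt t)) / (Real.sqrt t) ^ 2)))) -
          b * (1 / (2 * Real.sqrt (t - b ^ 2)) * 1)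
        = Real.arccos (b / Real.sqrt t) := by
      rw [hkey]
      have h1 : Real.sqrt t ≠ 0 := ne_of_gt hs0
      have h2 : Real.sqrt (t - b ^ 2) ≠ 0 := ne_of_gt hsw
      field_simp
      nlinarith [hst]
    rw [← this]
    exact h7.hasDerivWithinAt
  have hint : IntervalIntegrable (fun t => Real.arccos (b / Real.sqrt t))
      volume (b ^ 2) 1 := by
    apply ContinuousOn.intervalIntegrable
    rw [Set.uIcc_of_le hb2.le]
    apply Real.continuous_arccos.comp_continuousOn
    apply ContinuousOn.div continuousOn_const (Real.continuous_sqrt.continuousOn)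
    intro t ht
    have : 0 < t := lt_of_lt_of_le (by positivity) ht.1
    positivity
  rw [intervalIntegral.integral_eq_sub_of_hasDeriv_right_of_le hb2.le hcont hderiv hint]
  have hF1 : F 1 = Real.arccos b - b * Real.sqrt (1 - b ^ 2) := by
    simp [hF]
  have hFb : F (b ^ 2) = 0 := by
    simp [hF, Real.sqrt_sq hb0, div_self (ne_of_gt hbpos), Real.arccos_one]
  rw [hF1, hFb, sub_zero]

/-- `∫_{a²}^{1} arccos(|a|/√t) dt = arcsin r − r √(1 − r²)` where `r = √(1 − a²)`,
for `|a| ≤ 1`. -/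
theorem stmt1 (a r : ℝ) (ha : |a| ≤ 1) (hr : r = Real.sqrt (1 - a ^ 2)) :
    (∫ t in (a ^ 2 : ℝ)..1, Real.arccos (|a| / Real.sqrt t))
      = Real.arcsin r - r * Real.sqrt (1 - r ^ 2) := by
  set b := |a| with hb
  have hb0 : 0 ≤ b := abs_nonneg a
  have hba : a ^ 2 = b ^ 2 := (sq_abs a).symm
  have h1a : (0:ℝ) ≤ 1 - a ^ 2 := by nlinarith [sq_abs a]
  have hrsq : r ^ 2 = 1 - b ^ 2 := by
    rw [hr, Real.sq_sqrt h1a, hba]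
  have hr0 : 0 ≤ r := hr ▸ Real.sqrt_nonneg _
  have hsb : Real.sqrt (1 - r ^ 2) = b := by
    rw [hrsq]; simpa using Real.sqrt_sq hb0
  have harc : Real.arcsin r = Real.arccos b := by
    have hr1 : r ≤ 1 := by nlinarith [hrsq, sq_nonneg b]
    have hc : Real.cos (Real.arcsin r) = b := by
      rw [Real.cos_arcsin, hsb]
    rw [← hc, Real.arccos_cos (Real.arcsin_nonneg.mpr hr0)
      (le_trans (Real.arcsin_le_pi_div_two r) (by linarith [Real.pi_pos]))]
  rw [hba, harc, hsb]
  -- now goal: ∫ t in b^2..1, arccos (b/√t) = arccos b - r * b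
  have hrb : r * b = b * Real.sqrt (1 - b ^ 2) := by
    rw [hr, hba]; ring
  rw [hrb]
  rcases eq_or_lt_of_le hb0 with h0 | hbpos
  · -- b = 0
    rw [← h0]
    simp [Real.arccos_zero]
  · rcases eq_or_lt_of_le ha with h1 | hb1
    · -- b = 1
      rw [← hb] at *
      rw [h1]
      simp [Real.arccos_one]
    · exact key b hb0 hb1 hbpos
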